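/- Let k ≥ 2 and let w be a word of the form w = (01)^{p_0} 011001 (01)^{p_1} 011001 ⋯ (01)^{p_{j-1}} 011001 (01)^{p_j} with j ≥ 1, p_i ∈ {k-2, k-1} for all i, and p_0 = p_j = k-1. Then w has no string attractor of size two. -/

import Mathlib

def occursAt (f w : List Bool) (i : ℕ) : Prop :=
  i + f.length ≤ w.length ∧ (w.drop i).take f.length = f

def IsAttractor (w : List Bool) (Γ : Finset ℕ) : Prop :=
  (∀ γ ∈ Γ, γ < w.length) ∧
  ∀ f : List Bool, f ≠ [] → f <:+: w →
    ∃ i, occursAt f w i ∧ ∃ γ ∈ Γ, i ≤ γ ∧ γ < i + f.length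

def Emap (w : List Bool) : List Bool := (w.reverse).map (fun b => !b)

def IsPal (w : List Bool) : Prop := w.reverse = w

def IsAntipal (w : List Bool) : Prop := Emap w = w

def IsPalClosure (w p : List Bool) : Prop :=
  IsPal p ∧ w <+: p ∧ ∀ q, IsPal q → w <+: q → p.length ≤ q.length

def IsAntipalClosure (w p : List Bool) : Prop :=
  IsAntipal p ∧ w <+: p ∧ ∀ q, IsAntipal q → w <+: q → p.length ≤ q.length


private def pr : List Bool := [false, true]
private def bl : List Bool := [false, true, true, false, false, true]
private def OkC (C : List (List Bool)) : Prop := ∀ c ∈ C, c = pr ∨ c = bl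

lemma head2 {C : List (List Bool)} (h : OkC C) :
    ∃ r, C.flatten ++ pr = false :: true :: r := by
  cases C with
  | nil => exact ⟨[], rfl⟩
  | cons c C' =>
    rcases h c (List.mem_cons_self ..) with hc | hc <;> subst hc
    · exact ⟨C'.flatten ++ pr, by simp [pr]⟩
    · exact ⟨true :: false :: false :: true :: (C'.flatten ++ pr), by simp [bl]⟩

lemma claim1 {C : List (List Bool)} (h : OkC C) {W : List Bool} (hW : W = C.flatten ++ pr) :
    ∀ i, W[i]? = some true → W[i+1]? = some true →
      ∃ B, i = B + 1 ∧ (W.drop B).take 5 = [false, true, true, false, false] := by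
  subst hW
  induction C with
  | nil =>
    intro i h1 h2
    match i with
    | 0 => simp [pr] at h1
    | n+1 => simp [pr] at h2
  | cons c C' ih =>
    have hok' : OkC C' := fun c hc => h c (List.mem_cons_of_mem _ hc)
    obtain ⟨r, hr⟩ := head2 hok'
    intro i h1 h2
    rcases h c (List.mem_cons_self ..) with hc | hc <;> subst hc
    · have hE : (pr :: C').flatten ++ pr = false :: true :: (C'.flatten ++ pr) := by simp [pr]
      rw [hE] at h1 h2 ⊢
      match i with
      | 0 => simp at h1
      | 1 => rw [hr] at h2; simp at h2
      | n+2 =>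
        simp only [List.getElem?_cons_succ] at h1 h2
        obtain ⟨B, hB, hwin⟩ := ih hok' n h1 h2
        exact ⟨B+2, by omega, by simpa using hwin⟩
    · have hE : (bl :: C').flatten ++ pr
          = false :: true :: true :: false :: false :: true :: (C'.flatten ++ pr) := by simp [bl]
      rw [hE] at h1 h2 ⊢
      match i with
      | 0 => simp at h1
      | 1 =>
        refine ⟨0, rfl, ?_⟩
        simp
      | 2 => simp at h2
      | 3 => simp at h1
      | 4 => simp at h1
      | 5 => rw [hr] at h2; simp at h2
      | n+6 =>
        simp only [List.getElem?_cons_succ] at h1 h2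
        obtain ⟨B, hB, hwin⟩ := ih hok' n h1 h2
        exact ⟨B+6, by omega, by simpa using hwin⟩

lemma claim2 {C : List (List Bool)} (h : OkC C) {W : List Bool} (hW : W = C.flatten ++ pr) :
    ∀ i, W[i]? = some false → W[i+1]? = some false →
      ∃ B, i = B + 3 ∧ (W.drop B).take 7 = [false, true, true, false, false, true, false] := by
  subst hW
  induction C with
  | nil =>
    intro i h1 h2
    match i with
    | 0 => simp [pr] at h2
    | n+1 => simp [pr] at h2
  | cons c C' ih =>
    have hok' : OkC C' := fun c hc => h c (List.mem_cons_of_mem _ hc)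
    obtain ⟨r, hr⟩ := head2 hok'
    intro i h1 h2
    rcases h c (List.mem_cons_self ..) with hc | hc <;> subst hc
    · have hE : (pr :: C').flatten ++ pr = false :: true :: (C'.flatten ++ pr) := by simp [pr]
      rw [hE] at h1 h2 ⊢
      match i with
      | 0 => simp at h2
      | 1 => simp at h1
      | n+2 =>
        simp only [List.getElem?_cons_succ] at h1 h2
        obtain ⟨B, hB, hwin⟩ := ih hok' n h1 h2
        exact ⟨B+2, by omega, by simpa using hwin⟩
    · have hE : (bl :: C').flatten ++ pr
          = false :: true :: true :: false :: false :: true :: (C'.flatten ++ pr) := by simp [bl]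
      rw [hE] at h1 h2 ⊢
      match i with
      | 0 => simp at h2
      | 1 => simp at h1
      | 2 => simp at h1
      | 3 =>
        refine ⟨0, rfl, ?_⟩
        rw [hr]
        simp
      | 4 => simp at h2
      | 5 => simp at h1
      | n+6 =>
        simp only [List.getElem?_cons_succ] at h1 h2
        obtain ⟨B, hB, hwin⟩ := ih hok' n h1 h2
        exact ⟨B+6, by omega, by simpa using hwin⟩

lemma repr_lemma (k : ℕ) (hk : 2 ≤ k) (j : ℕ) (hj : 1 ≤ j)
    (p : ℕ → ℕ) (hp0 : p 0 = k - 1) (hpj : p j = k - 1)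
    (w : List Bool)
    (hw : w = (List.replicate (p 0) [false, true]).flatten ++
      (List.ofFn (fun i : Fin j =>
        [false, true, true, false, false, true] ++
          (List.replicate (p (i + 1)) [false, true]).flatten)).flatten) :
    ∃ C : List (List Bool), OkC (pr :: C) ∧ bl ∈ C ∧ w = (pr :: C).flatten ++ pr := by
  obtain ⟨q, rfl⟩ : ∃ q, k = q + 2 := ⟨k - 2, by omega⟩
  obtain ⟨j', rfl⟩ : ∃ j', j = j' + 1 := ⟨j - 1, by omega⟩
  have hp0' : p 0 = q + 1 := by omega
  have hpj' : p (j' + 1) = q + 1 := by omega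
  refine ⟨List.replicate q pr ++
      (List.ofFn (fun i : Fin j' => bl :: List.replicate (p (i.1 + 1)) pr)).flatten ++
      (bl :: List.replicate q pr), ?_, ?_, ?_⟩
  · intro c hc
    rcases List.mem_cons.mp hc with rfl | hc
    · exact Or.inl rfl
    rcases List.mem_append.mp hc with hc | hc
    · rcases List.mem_append.mp hc with hc | hc
      · exact Or.inl (List.eq_of_mem_replicate hc)
      · obtain ⟨l, hl, hc⟩ := List.mem_flatten.mp hc
        obtain ⟨i, rfl⟩ := List.mem_ofFn.mp hl
        rcases List.mem_cons.mp hc with rfl | hc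
        · exact Or.inr rfl
        · exact Or.inl (List.eq_of_mem_replicate hc)
    · rcases List.mem_cons.mp hc with rfl | hc
      · exact Or.inr rfl
      · exact Or.inl (List.eq_of_mem_replicate hc)
  · simp
  · have hcomm : ∀ n, (List.replicate n ([false,true] : List Bool)).flatten ++ [false,true]
        = [false,true] ++ (List.replicate n [false,true]).flatten := by
      intro n
      induction n with
      | zero => simp
      | succ m ih => simp [List.replicate_succ, ih]
    have hcomm' : ∀ (n : ℕ) (t : List Bool),
        (List.replicate n ([false,true] : List Bool)).flatten ++ ([false,true] ++ t)
        = [false,true] ++ ((List.replicate n [false,true]).flatten ++ t) := by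
      intro n t
      rw [← List.append_assoc, hcomm, List.append_assoc]
    rw [hw, hp0', List.ofFn_succ']
    simp only [Fin.coe_castSucc, Fin.val_last]
    rw [hpj']
    simp [pr, bl, List.flatten_flatten, List.map_ofFn, Function.comp_def, List.replicate_succ',
      hcomm, hcomm', List.append_assoc]

lemma win {α : Type*} {w seg : List α} {i n d : ℕ} (h : (w.drop i).take n = seg)
    (hd : d < n) : w[i+d]? = seg[d]? := by
  conv_rhs => rw [← h]
  rw [List.getElem?_take, if_pos hd, List.getElem?_drop]

lemma clash {w : List Bool} {x y : ℕ} (h1 : w[x]? = some true) (h2 : w[y]? = some false)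
    (h : x = y) : False := by
  subst h; rw [h1] at h2; simp at h2

lemma key_lemma (w : List Bool) (C : List (List Bool)) (hok : OkC (pr :: C))
    (hbl : bl ∈ C) (hw' : w = (pr :: C).flatten ++ pr)
    (hclaim1 : ∀ i, w[i]? = some true → w[i+1]? = some true →
      ∃ B, i = B + 1 ∧ (w.drop B).take 5 = [false, true, true, false, false])
    (hclaim2 : ∀ i, w[i]? = some false → w[i+1]? = some false →
      ∃ B, i = B + 3 ∧ (w.drop B).take 7 = [false, true, true, false, false, true, false]) :
    ∀ Γ : Finset ℕ, IsAttractor w Γ → Γ.card ≠ 2 := by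
  intro Γ hA hcard
  obtain ⟨hbound, hcov⟩ := hA
  have hokC : OkC C := fun c hc => hok c (List.mem_cons_of_mem _ hc)
  obtain ⟨r, hr⟩ := head2 hokC
  have hr4 : w = false :: true :: false :: true :: r := by
    rw [hw']
    simp only [List.flatten_cons, List.append_assoc]
    rw [hr]
    rfl
  -- infix facts
  have hblw : bl <:+: w := by
    rw [hw']
    exact (List.infix_of_mem_flatten (List.mem_cons_of_mem _ hbl)).trans
      (List.prefix_append _ _).isInfix
  have h11 : [true, true] <:+: w := (by decide : [true,true] <:+: bl).trans hblw
  have h00 : [false, false] <:+: w := (by decide : [false,false] <:+: bl).trans hblw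
  -- apply attractor to 11
  obtain ⟨i1, ⟨hl1, ho1⟩, γ1, hγ1Γ, hle1, hlt1⟩ := hcov [true, true] (by simp) h11
  have e10 : w[i1]? = some true := by simpa using win ho1 (show 0 < 2 by norm_num)
  have e11 : w[i1+1]? = some true := by simpa using win ho1 (show 1 < 2 by norm_num)
  obtain ⟨B, hiB, hwin⟩ := hclaim1 i1 e10 e11
  have hW0 : w[B]? = some false := by simpa using win hwin (show 0 < 5 by norm_num)
  have hW1 : w[B+1]? = some true := by simpa using win hwin (show 1 < 5 by norm_num)
  have hW2 : w[B+2]? = some true := by simpa using win hwin (show 2 < 5 by norm_num)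
  have hW3 : w[B+3]? = some false := by simpa using win hwin (show 3 < 5 by norm_num)
  have hW4 : w[B+4]? = some false := by simpa using win hwin (show 4 < 5 by norm_num)
  have hlt1' : γ1 < i1 + 2 := by simpa using hlt1
  have hγ1 : γ1 = B + 1 ∨ γ1 = B + 2 := by omega
  -- apply attractor to 00
  obtain ⟨i2, ⟨hl2, ho2⟩, γ2, hγ2Γ, hle2, hlt2⟩ := hcov [false, false] (by simp) h00
  have e20 : w[i2]? = some false := by simpa using win ho2 (show 0 < 2 by norm_num)
  have e21 : w[i2+1]? = some false := by simpa using win ho2 (show 1 < 2 by norm_num)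
  obtain ⟨B', hiB', hvin⟩ := hclaim2 i2 e20 e21
  have hV0 : w[B']? = some false := by simpa using win hvin (show 0 < 7 by norm_num)
  have hV1 : w[B'+1]? = some true := by simpa using win hvin (show 1 < 7 by norm_num)
  have hV2 : w[B'+2]? = some true := by simpa using win hvin (show 2 < 7 by norm_num)
  have hV3 : w[B'+3]? = some false := by simpa using win hvin (show 3 < 7 by norm_num)
  have hV4 : w[B'+4]? = some false := by simpa using win hvin (show 4 < 7 by norm_num)
  have hV5 : w[B'+5]? = some true := by simpa using win hvin (show 5 < 7 by norm_num)
  have hV6 : w[B'+6]? = some false := by simpa using win hvin (show 6 < 7 by norm_num)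
  have hlt2' : γ2 < i2 + 2 := by simpa using hlt2
  have hγ2 : γ2 = B' + 3 ∨ γ2 = B' + 4 := by omega
  -- γ1 ≠ γ2 and Γ = {γ1, γ2}
  have wγ1 : w[γ1]? = some true := by rcases hγ1 with h | h <;> rw [h] <;> assumption
  have wγ2 : w[γ2]? = some false := by rcases hγ2 with h | h <;> rw [h] <;> assumption
  have hne : γ1 ≠ γ2 := fun h => clash wγ1 wγ2 h
  have hsub : ({γ1, γ2} : Finset ℕ) ⊆ Γ := by
    intro x hx
    rcases Finset.mem_insert.mp hx with rfl | hx
    · exact hγ1Γ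
    · rw [Finset.mem_singleton.mp hx]; exact hγ2Γ
  have hΓeq : ({γ1, γ2} : Finset ℕ) = Γ :=
    Finset.eq_of_subset_of_card_le hsub (by rw [hcard, Finset.card_pair hne])
  have hmem : ∀ x ∈ Γ, x = γ1 ∨ x = γ2 := by
    intro x hx
    rw [← hΓeq] at hx
    simpa using hx
  rcases hγ1 with hB1 | hB1 <;> rcases hγ2 with hB2 | hB2
  · -- γ1 = B+1, γ2 = B'+3 : factor 010
    have hinf : [false, true, false] <:+: w := ⟨[], true :: r, by simp [hr4]⟩
    obtain ⟨i0, ⟨hl0, ho0⟩, γ, hγΓ, hle0, hlt0⟩ := hcov [false, true, false] (by simp) hinf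
    have hE0 : w[i0]? = some false := by simpa using win ho0 (show 0 < 3 by norm_num)
    have hE1 : w[i0+1]? = some true := by simpa using win ho0 (show 1 < 3 by norm_num)
    have hE2 : w[i0+2]? = some false := by simpa using win ho0 (show 2 < 3 by norm_num)
    have hlt0' : γ < i0 + 3 := by simpa using hlt0
    obtain ⟨d, hdlt, rfl⟩ : ∃ d, d < 3 ∧ γ = i0 + d := ⟨γ - i0, by omega, by omega⟩
    rcases hmem _ hγΓ with hγ | hγ
    · interval_cases d
      · exact clash hW1 hE0 (by omega)
      · exact clash hW2 hE2 (by omega)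
      · exact clash hE1 hW0 (by omega)
    · interval_cases d
      · exact clash hE1 hV4 (by omega)
      · exact clash hV2 hE0 (by omega)
      · exact clash hV1 hE0 (by omega)
  · -- γ1 = B+1, γ2 = B'+4 : factor 10
    have hinf : [true, false] <:+: w := ⟨[false], true :: r, by simp [hr4]⟩
    obtain ⟨i0, ⟨hl0, ho0⟩, γ, hγΓ, hle0, hlt0⟩ := hcov [true, false] (by simp) hinf
    have hE0 : w[i0]? = some true := by simpa using win ho0 (show 0 < 2 by norm_num)
    have hE1 : w[i0+1]? = some false := by simpa using win ho0 (show 1 < 2 by norm_num)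
    have hlt0' : γ < i0 + 2 := by simpa using hlt0
    obtain ⟨d, hdlt, rfl⟩ : ∃ d, d < 2 ∧ γ = i0 + d := ⟨γ - i0, by omega, by omega⟩
    rcases hmem _ hγΓ with hγ | hγ
    · interval_cases d
      · exact clash hW2 hE1 (by omega)
      · exact clash hE0 hW0 (by omega)
    · interval_cases d
      · exact clash hE0 hV4 (by omega)
      · exact clash hE0 hV3 (by omega)
  · -- γ1 = B+2, γ2 = B'+3 : factor 01
    have hinf : [false, true] <:+: w := ⟨[], false :: true :: r, by simp [hr4]⟩
    obtain ⟨i0, ⟨hl0, ho0⟩, γ, hγΓ, hle0, hlt0⟩ := hcov [false, true] (by simp) hinf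
    have hE0 : w[i0]? = some false := by simpa using win ho0 (show 0 < 2 by norm_num)
    have hE1 : w[i0+1]? = some true := by simpa using win ho0 (show 1 < 2 by norm_num)
    have hlt0' : γ < i0 + 2 := by simpa using hlt0
    obtain ⟨d, hdlt, rfl⟩ : ∃ d, d < 2 ∧ γ = i0 + d := ⟨γ - i0, by omega, by omega⟩
    rcases hmem _ hγΓ with hγ | hγ
    · interval_cases d
      · exact clash hW2 hE0 (by omega)
      · exact clash hW1 hE0 (by omega)
    · interval_cases d
      · exact clash hE1 hV4 (by omega)
      · exact clash hV2 hE0 (by omega)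
  · -- γ1 = B+2, γ2 = B'+4 : factor 101
    have hinf : [true, false, true] <:+: w := ⟨[false], r, by simp [hr4]⟩
    obtain ⟨i0, ⟨hl0, ho0⟩, γ, hγΓ, hle0, hlt0⟩ := hcov [true, false, true] (by simp) hinf
    have hE0 : w[i0]? = some true := by simpa using win ho0 (show 0 < 3 by norm_num)
    have hE1 : w[i0+1]? = some false := by simpa using win ho0 (show 1 < 3 by norm_num)
    have hE2 : w[i0+2]? = some true := by simpa using win ho0 (show 2 < 3 by norm_num)
    have hlt0' : γ < i0 + 3 := by simpa using hlt0
    obtain ⟨d, hdlt, rfl⟩ : ∃ d, d < 3 ∧ γ = i0 + d := ⟨γ - i0, by omega, by omega⟩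
    rcases hmem _ hγΓ with hγ | hγ
    · interval_cases d
      · exact clash hE2 hW4 (by omega)
      · exact clash hW2 hE1 (by omega)
      · exact clash hE0 hW0 (by omega)
    · interval_cases d
      · exact clash hE0 hV4 (by omega)
      · exact clash hE0 hV3 (by omega)
      · exact clash hE2 hV4 (by omega)

theorem stmt_13 (k : ℕ) (hk : 2 ≤ k) (j : ℕ) (hj : 1 ≤ j)
    (p : ℕ → ℕ)
    (hp : ∀ i ≤ j, p i = k - 2 ∨ p i = k - 1)
    (hp0 : p 0 = k - 1) (hpj : p j = k - 1)
    (w : List Bool)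
    (hw : w = (List.replicate (p 0) [false, true]).flatten ++
      (List.ofFn (fun i : Fin j =>
        [false, true, true, false, false, true] ++
          (List.replicate (p (i + 1)) [false, true]).flatten)).flatten) :
    ∀ Γ : Finset ℕ, IsAttractor w Γ → Γ.card ≠ 2 := by
  obtain ⟨C, hok, hbl, hw'⟩ := repr_lemma k hk j hj p hp0 hpj w hw
  exact key_lemma w C hok hbl hw' (claim1 hok hw') (claim2 hok hw')
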